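/- Let K ∈ ℝ^{n×n} be symmetric positive definite with all entries strictly positive, let ψ ∈ ℝⁿ with ψ_v ∈ {−1,1}, and let K_ψ = diag(ψ)·K·diag(ψ). Let w_1,…,w_N be N distinct nodes with labels y_i = ψ_{w_i} ∈ {−1,1}, and suppose the regularization parameter satisfies γ > 2·max_v K_{vv}. Let c ∈ ℝᴺ solve ((K_ψ)_W + γN·I_N) c = (y_1,…,y_N)ᵀ, where (K_ψ)_W is the N×N submatrix with entries K_ψ(w_i,w_j), and define y*_v = Σ_{i=1}^N c_i K_ψ(v,w_i). Then sign(y*_v) = ψ_v for every node v. -/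

import Mathlib

open Matrix

/-- Consistency of the binary-feature-augmented RLS classifier with `N` labels: if the
kernel `K` is symmetric positive definite with strictly positive entries, the labels
`y i = ψ (w i) ∈ {−1,1}` at the distinct nodes `w i` are correctly classified by the binary
feature map `ψ`, and the regularization parameter satisfies `γ > 2 maxᵥ K(v,v)`, then the
RLS classification based on the augmented kernel `K_ψ = diag(ψ) K diag(ψ)` reproduces `ψ`:
`sign(y*_v) = ψ v` for all nodes `v`. -/
theorem stmt_13 {n N : ℕ} (hN : 0 < N)
    (K : Matrix (Fin n) (Fin n) ℝ) (hK : K.PosDef)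
    (hKpos : ∀ v w : Fin n, 0 < K v w)
    (ψ : Fin n → ℝ) (hψ : ∀ v : Fin n, ψ v = 1 ∨ ψ v = -1)
    (w : Fin N → Fin n) (hw : Function.Injective w)
    (γ : ℝ) (hγ : ∀ v : Fin n, 2 * K v v < γ)
    (c : Fin N → ℝ)
    (hc : (Matrix.of (fun i j : Fin N =>
          (Matrix.diagonal ψ * K * Matrix.diagonal ψ) (w i) (w j)) +
        (γ * (N : ℝ)) • (1 : Matrix (Fin N) (Fin N) ℝ)) *ᵥ c = fun i => ψ (w i)) :
    ∀ v : Fin n,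
      Real.sign (∑ i : Fin N, c i * (Matrix.diagonal ψ * K * Matrix.diagonal ψ) v (w i)) =
        ψ v := by
  intro v
  have hψsq : ∀ u, ψ u * ψ u = 1 := by
    intro u; rcases hψ u with h | h <;> rw [h] <;> norm_num
  have hγ0 : 0 < γ := lt_trans (by have := hKpos v v; linarith) (hγ v)
  have hN0 : (0:ℝ) < (N:ℝ) := by exact_mod_cast hN
  set d : Fin N → ℝ := fun i => ψ (w i) * c i with hd
  -- the linear system in terms of d
  have E : ∀ i, (∑ j, K (w i) (w j) * d j) + γ * N * d i = 1 := by
    intro i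
    have h := congrFun hc i
    simp only [Matrix.mulVec, dotProduct, Matrix.add_apply, Matrix.of_apply,
      Matrix.smul_apply, Matrix.one_apply, Matrix.diagonal_mul, Matrix.mul_diagonal,
      smul_eq_mul, mul_ite, mul_one, mul_zero, add_mul, ite_mul, zero_mul,
      Finset.sum_add_distrib, Finset.sum_ite_eq, Finset.mem_univ, if_true] at h
    have h2 := congrArg (fun t => ψ (w i) * t) h
    simp only [mul_add, Finset.mul_sum] at h2
    have h3 : ∀ j, ψ (w i) * (ψ (w i) * K (w i) (w j) * ψ (w j) * c j)
        = K (w i) (w j) * d j := by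
      intro j
      calc ψ (w i) * (ψ (w i) * K (w i) (w j) * ψ (w j) * c j)
          = (ψ (w i) * ψ (w i)) * (K (w i) (w j) * (ψ (w j) * c j)) := by ring
        _ = K (w i) (w j) * d j := by rw [hψsq (w i), one_mul]
    rw [Finset.sum_congr rfl (fun j _ => h3 j)] at h2
    have h4 : ψ (w i) * (γ * ↑N * c i) = γ * ↑N * d i := by simp only [hd]; ring
    rw [h4, hψsq (w i)] at h2
    exact h2
  -- positive semidefinite quadratic form
  have hQ : 0 ≤ ∑ i, d i * ∑ j, K (w i) (w j) * d j := by
    have h := (hK.posSemidef.submatrix w).dotProduct_mulVec_nonneg d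
    simpa [dotProduct, Matrix.mulVec, Matrix.submatrix_apply] using h
  -- sum the equations against d
  have hsum : (∑ i, d i * ∑ j, K (w i) (w j) * d j) + γ * N * (∑ i, d i ^ 2)
      = ∑ i, d i := by
    have : ∀ i, d i * ((∑ j, K (w i) (w j) * d j) + γ * N * d i) = d i := by
      intro i; rw [E i, mul_one]
    calc (∑ i, d i * ∑ j, K (w i) (w j) * d j) + γ * N * (∑ i, d i ^ 2)
        = ∑ i, d i * ((∑ j, K (w i) (w j) * d j) + γ * N * d i) := by
          rw [Finset.mul_sum, ← Finset.sum_add_distrib]; congr 1; ext i; ring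
      _ = ∑ i, d i := Finset.sum_congr rfl fun i _ => this i
  set A : ℝ := ∑ i, |d i| with hA
  have hA0 : 0 ≤ A := Finset.sum_nonneg fun i _ => abs_nonneg _
  have hS2 : γ * N * (∑ i, d i ^ 2) ≤ A := by
    have h1 : ∑ i, d i ≤ A := Finset.sum_le_sum fun i _ => le_abs_self _
    linarith
  have hCS : A ^ 2 ≤ N * ∑ i, d i ^ 2 := by
    have := sq_sum_le_card_mul_sum_sq (s := Finset.univ) (f := fun i => |d i|)
    simpa [sq_abs, hA] using this
  have hApos : 0 < A := by
    rcases lt_or_eq_of_le hA0 with h | h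
    · exact h
    · exfalso
      have hz : ∀ i, d i = 0 := by
        intro i
        have := Finset.sum_eq_zero_iff_of_nonneg (fun i _ => abs_nonneg (d i)) |>.1 h.symm i
          (Finset.mem_univ i)
        exact abs_eq_zero.1 this
      have := E ⟨0, hN⟩
      simp [hz] at this
  have hAγ : γ * A ≤ 1 := by
    have h1 : γ * A ^ 2 ≤ A := by
      have h2 : γ * (N * ∑ i, d i ^ 2) ≤ A := by
        have := hS2; nlinarith
      nlinarith
    nlinarith
  -- entrywise bound on K
  have hKhalf : ∀ a b : Fin n, K a b ≤ γ / 2 := by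
    intro a b
    rcases eq_or_ne a b with rfl | hab
    · have := hγ a; linarith
    · have hx := hK.posSemidef.dotProduct_mulVec_nonneg (fun u => (if u = a then (1:ℝ) else 0) - (if u = b then 1 else 0))
      have hsym : K b a = K a b := by
        have := hK.1
        have h2 := congrFun (congrFun this a) b
        simpa [Matrix.conjTranspose_apply] using h2
      simp only [dotProduct, Matrix.mulVec, star_trivial, sub_mul, mul_sub, ite_mul,
        one_mul, zero_mul, mul_ite, mul_one, mul_zero, Finset.sum_sub_distrib,
        Finset.sum_ite_eq', Finset.mem_univ, if_true] at hx
      have h1 := hγ a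
      have h2 := hγ b
      nlinarith [hx]
  -- each component bound
  have hbound : ∀ i, |∑ j, K (w i) (w j) * d j| ≤ 1 / 2 := by
    intro i
    have h1 : |∑ j, K (w i) (w j) * d j| ≤ ∑ j, (γ / 2) * |d j| := by
      refine (Finset.abs_sum_le_sum_abs _ _).trans ?_
      refine Finset.sum_le_sum fun j _ => ?_
      rw [abs_mul]
      exact mul_le_mul_of_nonneg_right
        ((abs_of_pos (hKpos _ _)).le.trans (hKhalf _ _)) (abs_nonneg _)
    have h2 : ∑ j, (γ / 2) * |d j| = (γ / 2) * A := by rw [Finset.mul_sum]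
    rw [h2] at h1
    linarith
  -- positivity of d
  have hdpos : ∀ i, 0 < d i := by
    intro i
    have h1 := E i
    have h2 := (abs_le.1 (hbound i)).2
    have h3 : γ * N * d i ≥ 1 / 2 := by linarith
    have : 0 < γ * N := by positivity
    nlinarith
  -- final computation
  have hfin : ∑ i : Fin N, c i * (Matrix.diagonal ψ * K * Matrix.diagonal ψ) v (w i)
      = ψ v * ∑ i, d i * K v (w i) := by
    rw [Finset.mul_sum]
    refine Finset.sum_congr rfl fun i _ => ?_
    simp only [Matrix.diagonal_mul, Matrix.mul_diagonal, hd]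
    ring
  have hP : 0 < ∑ i, d i * K v (w i) := by
    refine Finset.sum_pos (fun i _ => mul_pos (hdpos i) (hKpos _ _)) ?_
    exact ⟨⟨0, hN⟩, Finset.mem_univ _⟩
  rw [hfin]
  rcases hψ v with h | h <;> rw [h]
  · rw [one_mul]; exact Real.sign_of_pos hP
  · rw [neg_one_mul]; exact Real.sign_of_neg (neg_neg_of_pos hP)
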